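/- If a topological space X is countably α-compact, then every locally finite family of nonempty subsets of X is finite. -/
import Mathlib


def AlphaOpen {X : Type*} [TopologicalSpace X] (A : Set X) : Prop :=
  A ⊆ interior (closure (interior A))

def AlphaClosed {X : Type*} [TopologicalSpace X] (A : Set X) : Prop :=
  AlphaOpen Aᶜ

def AlphaContinuous {X Y : Type*} [TopologicalSpace X] [TopologicalSpace Y]
    (f : X → Y) : Prop :=
  ∀ V : Set Y, IsOpen V → AlphaOpen (f ⁻¹' V)

def CountablyAlphaCompact (X : Type*) [TopologicalSpace X] : Prop :=
  ∀ U : ℕ → Set X, (∀ n, AlphaOpen (U n)) → (⋃ n, U n) = Set.univ →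
    ∃ t : Finset ℕ, (⋃ n ∈ t, U n) = Set.univ

def AlphaCompact (X : Type*) [TopologicalSpace X] : Prop :=
  ∀ 𝒰 : Set (Set X), (∀ A ∈ 𝒰, AlphaOpen A) → ⋃₀ 𝒰 = Set.univ →
    ∃ 𝒱 ⊆ 𝒰, 𝒱.Finite ∧ ⋃₀ 𝒱 = Set.univ

def CountablyCompact (X : Type*) [TopologicalSpace X] : Prop :=
  ∀ U : ℕ → Set X, (∀ n, IsOpen (U n)) → (⋃ n, U n) = Set.univ →
    ∃ t : Finset ℕ, (⋃ n ∈ t, U n) = Set.univ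

lemma isOpen_alphaOpen {X : Type*} [TopologicalSpace X] {A : Set X}
    (hA : IsOpen A) : AlphaOpen A := by
  intro x hx
  have h1 : interior A ⊆ interior (closure (interior A)) :=
    interior_maximal subset_closure isOpen_interior
  exact h1 (by rwa [hA.interior_eq])

theorem stmt9 {X : Type*} [TopologicalSpace X] (h : CountablyAlphaCompact X)
    (S : Set (Set X)) (hne : ∀ s ∈ S, s.Nonempty)
    (hlf : LocallyFinite (fun s : S => (s : Set X))) : S.Finite := by
  by_contra hS
  have hinf : S.Infinite := hS
  let f := hinf.natEmbedding
  -- pick a point in each member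
  choose x hx using fun n => hne (f n) (f n).2
  set C : ℕ → Set X := fun n => closure {y | ∃ m, n ≤ m ∧ y = x m} with hC
  have hCanti : ∀ {m n : ℕ}, m ≤ n → C n ⊆ C m := by
    intro m n hmn
    apply closure_mono
    rintro y ⟨k, hk, rfl⟩
    exact ⟨k, hmn.trans hk, rfl⟩
  set V : ℕ → Set X := fun n => (C n)ᶜ with hV
  have hVopen : ∀ n, IsOpen (V n) := fun n => isClosed_closure.isOpen_compl
  have hVcover : (⋃ n, V n) = Set.univ := by
    ext y
    simp only [Set.mem_iUnion, Set.mem_univ, iff_true]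
    obtain ⟨U, hU, hUfin⟩ := hlf y
    -- indices n with x n ∈ U are finite
    have hidx : {n : ℕ | x n ∈ U}.Finite := by
      have : Set.InjOn (fun n => (f n : S)) {n : ℕ | x n ∈ U} := fun a _ b _ hab =>
        f.injective hab
      apply Set.Finite.of_finite_image _ this
      apply hUfin.subset
      rintro s ⟨n, hn, rfl⟩
      exact ⟨x n, hx n, hn⟩
    obtain ⟨N, hN⟩ := hidx.bddAbove
    refine ⟨N + 1, ?_⟩
    obtain ⟨O, hOU, hOopen, hyO⟩ := mem_nhds_iff.mp hU
    intro hyC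
    rcases mem_closure_iff.mp hyC O hOopen hyO with ⟨z, hzO, k, hk, rfl⟩
    have : k ≤ N := hN (hOU hzO)
    omega
  obtain ⟨t, ht⟩ := h V (fun n => isOpen_alphaOpen (hVopen n)) hVcover
  set N := t.sup id with hNdef
  have hxN : x N ∈ ⋃ n ∈ t, V n := ht ▸ Set.mem_univ _
  simp only [Set.mem_iUnion] at hxN
  obtain ⟨m, hmt, hxm⟩ := hxN
  have hmN : m ≤ N := Finset.le_sup (f := id) hmt
  have : x N ∈ C m := hCanti hmN (subset_closure ⟨N, le_refl _, rfl⟩)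
  exact hxm this
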